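/- For any two binary strings x ∈ Ω(w,s) and y ∈ Ω(w,s) (ending patterns), the star product x*y, defined as Σ_{j=1}^{min(k,m)} ∏_{i=1}^{j} δ(x_i, y_{m-j+i}) with δ(a,b) = 1/p_a if a = b and 0 otherwise (p_1 = p, p_0 = 1-p), is, as a function of p on (0,1), of order 1/p^s as p → 0 if and only if x = y; moreover for all x, y ∈ Ω(w,s), x*y ≥ 1/p. -/

import Mathlib

open MeasureTheory ProbabilityTheory ENNReal Filter
open scoped Classical Topology

noncomputable def starProd (p : ℝ) (x y : List Bool) : ℝ :=
  ∑ j ∈ Finset.Icc 1 (min x.length y.length),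
    ∏ i ∈ Finset.range j,
      (if x.getD i false = y.getD (y.length - j + i) false
       then (if x.getD i false then p else 1 - p)⁻¹ else 0)

namespace Stmt14Aux

lemma count_false_eq (l : List Bool) : l.count false = l.length - l.count true := by
  induction l with
  | nil => simp
  | cons b t ih =>
    have : t.count true ≤ t.length := List.count_le_length
    cases b <;> simp [ih, List.count_cons] <;> omega

lemma map_prod (f : Bool → ℝ) (l : List Bool) :
    (l.map f).prod = f true ^ l.count true * f false ^ l.count false := by
  induction l with
  | nil => simp
  | cons b t ih =>
    cases b <;> simp [ih, List.count_cons, pow_succ] <;> ring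

lemma prod_range_getD (f : Bool → ℝ) (l : List Bool) :
    ∀ j, j ≤ l.length → ∏ i ∈ Finset.range j, f (l.getD i false) = ((l.take j).map f).prod := by
  intro j
  induction j with
  | zero => simp
  | succ n ih =>
    intro hn
    have hlt : n < l.length := by omega
    rw [Finset.prod_range_succ, ih (by omega), List.take_succ, List.map_append,
      List.prod_append, List.getElem?_eq_getElem hlt, List.getD_eq_getElem l false hlt]
    simp

/-- The matching condition for the `j`-th term. -/
def Match (x y : List Bool) (j : ℕ) : Prop :=
  ∀ i < j, x.getD i false = y.getD (y.length - j + i) false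

lemma term_eq (p : ℝ) (hp0 : p ≠ 0) (hp1 : (1 : ℝ) - p ≠ 0)
    (x y : List Bool) (j : ℕ) (hj : j ≤ x.length) :
    (∏ i ∈ Finset.range j,
      (if x.getD i false = y.getD (y.length - j + i) false
       then (if x.getD i false then p else 1 - p)⁻¹ else 0))
    = if Match x y j then
        (p ^ ((x.take j).count true) * (1 - p) ^ (j - (x.take j).count true))⁻¹ else 0 := by
  by_cases h : Match x y j
  · rw [if_pos h]
    have h1 : (∏ i ∈ Finset.range j,
        (if x.getD i false = y.getD (y.length - j + i) false
         then (if x.getD i false then p else 1 - p)⁻¹ else 0))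
        = ∏ i ∈ Finset.range j, ((if x.getD i false then p else 1 - p))⁻¹ := by
      refine Finset.prod_congr rfl fun i hi => ?_
      rw [if_pos (h i (Finset.mem_range.mp hi))]
    rw [h1, Finset.prod_inv_distrib,
      prod_range_getD (fun b => if b then p else 1 - p) x j hj,
      map_prod, count_false_eq, List.length_take]
    simp [Nat.min_eq_left hj]
  · rw [if_neg h]
    unfold Match at h
    push_neg at h
    obtain ⟨i, hi, hne⟩ := h
    exact Finset.prod_eq_zero (Finset.mem_range.mpr hi) (if_neg hne)

lemma tendsto_aux (e c : ℕ) :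
    Filter.Tendsto (fun p : ℝ => p ^ e * ((1 - p) ^ c)⁻¹) (𝓝[>] 0)
      (𝓝 (if e = 0 then 1 else 0)) := by
  have h : Filter.Tendsto (fun p : ℝ => p ^ e * ((1 - p) ^ c)⁻¹) (𝓝 0)
      (𝓝 ((0 : ℝ) ^ e * (((1 : ℝ) - 0) ^ c)⁻¹)) := by
    apply Filter.Tendsto.mul
    · exact (continuous_pow e).tendsto 0
    · apply Filter.Tendsto.inv₀
      · exact ((continuous_const.sub continuous_id).pow c).tendsto 0
      · simp
  have := h.mono_left (nhdsWithin_le_nhds : 𝓝[>] (0:ℝ) ≤ 𝓝 0)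
  simpa [zero_pow_eq] using this

end Stmt14Aux

namespace Stmt14Aux

lemma a_lt (x : List Bool) (hlast : x.getLast? = some true) (j : ℕ) (hj : j < x.length) :
    (x.take j).count true < x.count true := by
  have hmem : true ∈ x.drop j := by
    have h1 : (x.drop j).getLast? = some true := by
      rw [List.getLast?_drop, if_neg (by omega)]; exact hlast
    exact List.mem_of_mem_getLast? (by simp [h1])
  have hpos : 0 < (x.drop j).count true := List.count_pos_iff.mpr hmem
  have hx2 : x.count true = (x.take j).count true + (x.drop j).count true := by
    conv_lhs => rw [← List.take_append_drop j x]
    rw [List.count_append]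
  omega

end Stmt14Aux

open Stmt14Aux

theorem stmt_14 (w s : ℕ) (hs : 1 ≤ s) (hsw : s ≤ w)
    (x y : List Bool)
    (hx : x.length ≤ w ∧ x.head? = some true ∧ x.getLast? = some true ∧ x.count true = s)
    (hy : y.length ≤ w ∧ y.head? = some true ∧ y.getLast? = some true ∧ y.count true = s) :
    (x = y → Tendsto (fun p : ℝ => starProd p x y * p ^ s) (𝓝[>] 0) (𝓝 1))
    ∧ (x ≠ y → Tendsto (fun p : ℝ => starProd p x y * p ^ s) (𝓝[>] 0) (𝓝 0))
    ∧ ∀ p : ℝ, p ∈ Set.Ioo (0 : ℝ) 1 → 1 / p ≤ starProd p x y := by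
  classical
  obtain ⟨hxw, hxh, hxl, hxc⟩ := hx
  obtain ⟨hyw, hyh, hyl, hyc⟩ := hy
  have hk1 : 1 ≤ x.length := by cases x <;> simp_all
  have hm1 : 1 ≤ y.length := by cases y <;> simp_all
  have hx0 : x.getD 0 false = true := by
    cases x with
    | nil => simp at hxh
    | cons a t => simp at hxh; simp [hxh]
  have hy0 : y.getD 0 false = true := by
    cases y with
    | nil => simp at hyh
    | cons a t => simp at hyh; simp [hyh]
  have hylast : y.getD (y.length - 1) false = true := by
    rw [List.getLast?_eq_getElem?] at hyl
    have hlt : y.length - 1 < y.length := by omega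
    rw [List.getElem?_eq_getElem hlt] at hyl
    rw [List.getD_eq_getElem y false hlt]
    exact Option.some_injective _ hyl
  set A : ℕ → ℕ := fun j => (x.take j).count true with hA
  have hAle : ∀ j, A j ≤ s := fun j => hxc ▸ (List.take_sublist j x).count_le true
  have hAlt : ∀ j < x.length, A j < s := fun j hj => hxc ▸ a_lt x hxl j hj
  have hAk : A x.length = s := by simp [hA, List.take_length, hxc]
  -- the closed form of each term of `starProd · * p ^ s` on (0,1)
  set G : ℕ → ℝ → ℝ := fun j p =>
    if Match x y j then p ^ (s - A j) * ((1 - p) ^ (j - A j))⁻¹ else 0 with hG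
  have heq : ∀ p ∈ Set.Ioo (0 : ℝ) 1,
      starProd p x y * p ^ s
        = ∑ j ∈ Finset.Icc 1 (min x.length y.length), G j p := by
    intro p hp
    have hp0 : p ≠ 0 := ne_of_gt hp.1
    have hp1 : (1 : ℝ) - p ≠ 0 := by
      have := hp.2; intro h; linarith [h]
    rw [starProd, Finset.sum_mul]
    refine Finset.sum_congr rfl fun j hj => ?_
    have hjx : j ≤ x.length := le_trans (Finset.mem_Icc.mp hj).2 (min_le_left _ _)
    rw [term_eq p hp0 hp1 x y j hjx]
    simp only [hG]
    by_cases hM : Match x y j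
    · rw [if_pos hM, if_pos hM, mul_inv]
      have hps : p ^ (s - A j) = p ^ s * (p ^ A j)⁻¹ := pow_sub₀ p hp0 (hAle j)
      rw [hps]; ring
    · rw [if_neg hM, if_neg hM, zero_mul]
  -- limits of each term
  set L : ℕ → ℝ := fun j => if Match x y j then (if s - A j = 0 then 1 else 0) else 0 with hL
  have htend : Tendsto (fun p : ℝ => starProd p x y * p ^ s) (𝓝[>] 0)
      (𝓝 (∑ j ∈ Finset.Icc 1 (min x.length y.length), L j)) := by
    have h1 : Tendsto (fun p : ℝ => ∑ j ∈ Finset.Icc 1 (min x.length y.length), G j p)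
        (𝓝[>] 0) (𝓝 (∑ j ∈ Finset.Icc 1 (min x.length y.length), L j)) := by
      refine tendsto_finset_sum _ fun j _ => ?_
      by_cases hM : Match x y j
      · simpa [hG, hL, hM] using tendsto_aux (s - A j) (j - A j)
      · simpa [hG, hL, hM] using (tendsto_const_nhds : Tendsto (fun _ : ℝ => (0:ℝ)) _ _)
    refine h1.congr' ?_
    have hmem : Set.Ioo (0 : ℝ) 1 ∈ 𝓝[>] (0 : ℝ) :=
      Ioo_mem_nhdsGT_of_mem ⟨le_refl 0, one_pos⟩
    filter_upwards [hmem] with p hp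
    exact (heq p hp).symm
  have hLlt : ∀ j < x.length, L j = 0 := by
    intro j hj
    have := hAlt j hj
    simp only [hL]
    split
    · rw [if_neg (by omega)]
    · rfl
  refine ⟨?_, ?_, ?_⟩
  · -- x = y
    rintro rfl
    have hMk : Match x x x.length := by
      intro i hi
      congr 1
      omega
    have hsum : ∑ j ∈ Finset.Icc 1 (min x.length x.length), L j = 1 := by
      rw [min_self]
      rw [Finset.sum_eq_single_of_mem x.length (Finset.mem_Icc.mpr ⟨hk1, le_refl _⟩)]
      · simp [hL, hMk, hAk]
      · intro j hj hne
        exact hLlt j (lt_of_le_of_ne (Finset.mem_Icc.mp hj).2 hne)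
    rwa [hsum] at htend
  · -- x ≠ y
    intro hne
    have hsum : ∑ j ∈ Finset.Icc 1 (min x.length y.length), L j = 0 := by
      refine Finset.sum_eq_zero fun j hj => ?_
      rcases lt_or_eq_of_le (le_trans (Finset.mem_Icc.mp hj).2 (min_le_left _ _)) with h | h
      · exact hLlt j h
      · -- j = x.length; show ¬ Match x y j
        simp only [hL]
        rw [if_neg]
        intro hM
        have hkm : x.length ≤ y.length := h ▸ le_trans (Finset.mem_Icc.mp hj).2 (min_le_right _ _)
        subst h
        rcases eq_or_lt_of_le hkm with heqlen | hlt
        · -- same length: x = y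
          apply hne
          apply List.ext_getElem heqlen
          intro n h1 h2
          have := hM n h1
          rw [show y.length - x.length + n = n by omega] at this
          rw [← List.getD_eq_getElem x false h1, ← List.getD_eq_getElem y false h2]
          exact this
        · -- y strictly longer: count true y ≥ s + 1, contradiction
          exfalso
          have hdrop : y.drop (y.length - x.length) = x := by
            apply List.ext_getElem
            · rw [List.length_drop]; omega
            · intro n h1 h2
              rw [List.getElem_drop]
              have h3 := hM n h2
              have h2' : n < x.length := h2
              have h4 : y.length - x.length + n < y.length := by omega
              rw [List.getD_eq_getElem x false h2', List.getD_eq_getElem y false h4] at h3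
              exact h3.symm
          have hcnt : y.count true
              = (y.take (y.length - x.length)).count true + x.count true := by
            conv_lhs => rw [← List.take_append_drop (y.length - x.length) y]
            rw [List.count_append, hdrop]
          have hmem0 : true ∈ y.take (y.length - x.length) := by
            obtain ⟨t, rfl⟩ : ∃ t, y = true :: t := by
              cases y with
              | nil => simp at hyh
              | cons a t => simp at hyh; exact ⟨t, by rw [hyh]⟩
            obtain ⟨n, hn⟩ : ∃ n, (true :: t).length - x.length = n + 1 := ⟨(true :: t).length - x.length - 1, by omega⟩
            rw [hn, List.take_succ_cons]
            exact List.mem_cons_self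
          have hpos : 0 < (y.take (y.length - x.length)).count true :=
            List.count_pos_iff.mpr hmem0
          omega
    rwa [hsum] at htend
  · -- lower bound
    intro p hp
    have hp0 : p ≠ 0 := ne_of_gt hp.1
    have hp1 : (1 : ℝ) - p ≠ 0 := by have := hp.2; intro h; linarith [h]
    have hq : (0:ℝ) < 1 - p := by linarith [hp.2]
    rw [starProd]
    have h1mem : 1 ∈ Finset.Icc 1 (min x.length y.length) :=
      Finset.mem_Icc.mpr ⟨le_refl 1, le_min hk1 hm1⟩
    have hterm : ∀ j ∈ Finset.Icc 1 (min x.length y.length),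
        (0:ℝ) ≤ ∏ i ∈ Finset.range j,
          (if x.getD i false = y.getD (y.length - j + i) false
           then (if x.getD i false then p else 1 - p)⁻¹ else 0) := by
      intro j hj
      refine Finset.prod_nonneg fun i _ => ?_
      split
      · split
        · exact inv_nonneg.mpr (le_of_lt hp.1)
        · exact inv_nonneg.mpr (le_of_lt hq)
      · exact le_refl 0
    have hM1 : Match x y 1 := by
      intro i hi
      interval_cases i
      rw [hx0]
      simpa using hylast.symm
    have hA1 : A 1 = 1 := by
      simp only [hA]
      rw [List.take_one]
      cases x with
      | nil => simp at hxh
      | cons a t => simp at hxh; simp [hxh]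
    have hterm1 : (∏ i ∈ Finset.range 1,
        (if x.getD i false = y.getD (y.length - 1 + i) false
         then (if x.getD i false then p else 1 - p)⁻¹ else 0)) = 1 / p := by
      rw [term_eq p hp0 hp1 x y 1 hk1, if_pos hM1]
      simp only [hA] at hA1
      rw [hA1]
      simp
    exact le_trans (le_of_eq hterm1.symm) (Finset.single_le_sum hterm h1mem)
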